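/- Let μ and π be Borel probability measures on ℝ^m with finite second moments, and suppose: (i) D_TV(μ, π) ≤ K·ρ^h for constants K > 0, ρ ∈ (0, 1), and a real number h ≥ 0; (ii) both measures satisfy the sub-Gaussian tail bound μ({x : ‖x‖₂² > s}) ≤ C·e^{−c s} and π({x : ‖x‖₂² > s}) ≤ C·e^{−c s} for all s > 0, with constants C, c > 0. Then the second-moment matrices M(μ) = ∫ x xᵀ dμ and M(π) = ∫ x xᵀ dπ satisfy ‖M(μ) − M(π)‖₂ ≤ 2K·ρ^{h/3} + 2C·(ρ^{−2h/3} + 1/c)·e^{−c·ρ^{−2h/3}}. -/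

import Mathlib

open Matrix MeasureTheory

/-- The spectral norm (largest singular value) of a real matrix, realized as the operator
norm of the induced linear map between Euclidean spaces. -/
noncomputable def matrixSpectralNorm {m n : ℕ} (A : Matrix (Fin m) (Fin n) ℝ) : ℝ :=
  ‖LinearMap.toContinuousLinearMap (Matrix.toEuclideanLin A)‖

/-- Total variation distance `D_TV(μ, ν) = sup_{A measurable} |μ(A) − ν(A)|`. -/
noncomputable def tvDist {V : Type*} [MeasurableSpace V] (μ ν : Measure V) : ℝ :=
  ⨆ A : {s : Set V // MeasurableSet s}, |(μ A).toReal - (ν A).toReal|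

/-- The second-moment matrix `M(μ) = ∫ x xᵀ dμ(x)`, defined entrywise. -/
noncomputable def secondMoment {m : ℕ} (μ : Measure (Fin m → ℝ)) :
    Matrix (Fin m) (Fin m) ℝ :=
  Matrix.of fun i j => ∫ x, x i * x j ∂μ

open Set

section aux
variable {V : Type*} [MeasurableSpace V] (μ ν : Measure V)
  [IsProbabilityMeasure μ] [IsProbabilityMeasure ν]

lemma prob_toReal_le_one {A : Set V} : (μ A).toReal ≤ 1 := by
  have h1 : μ A ≤ 1 := prob_le_one
  calc (μ A).toReal ≤ (1 : ENNReal).toReal := ENNReal.toReal_mono (by simp) h1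
  _ = 1 := by simp

lemma meas_diff_le_tvDist {A : Set V} (hA : MeasurableSet A) :
    (μ A).toReal - (ν A).toReal ≤ tvDist μ ν := by
  have hbdd : BddAbove (Set.range fun A : {s : Set V // MeasurableSet s} =>
      |(μ A).toReal - (ν A).toReal|) := by
    refine ⟨1, fun x hx => ?_⟩
    obtain ⟨B, rfl⟩ := hx
    rw [abs_sub_le_iff]
    constructor <;>
      [skip; skip] <;>
      · have h1 := prob_toReal_le_one (A := (B : Set V)) (μ := μ)
        have h2 := prob_toReal_le_one (A := (B : Set V)) (μ := ν)
        have := ENNReal.toReal_nonneg (a := μ B)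
        have := ENNReal.toReal_nonneg (a := ν B)
        linarith
  exact le_trans (le_abs_self _) (le_ciSup hbdd ⟨A, hA⟩)

lemma tvDist_nonneg : 0 ≤ tvDist μ ν := by
  have := meas_diff_le_tvDist μ ν (A := ∅) MeasurableSet.empty
  simpa using this

lemma tvDist_comm : tvDist μ ν = tvDist ν μ := by
  unfold tvDist
  exact iSup_congr fun A => abs_sub_comm _ _

/-- one-sided bounded-difference lemma -/
lemma integral_diff_le_of_bounded {g : V → ℝ} (hg : Measurable g) {M : ℝ}
    (hM : 0 ≤ M) (hb : ∀ x, |g x| ≤ M) :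
    ∫ x, g x ∂μ - ∫ x, g x ∂ν ≤ 2 * M * tvDist μ ν := by
  have hgint : ∀ (κ : Measure V) [IsProbabilityMeasure κ], Integrable g κ := by
    intro κ _
    exact (integrable_const M).mono' hg.aestronglyMeasurable
      (ae_of_all _ fun x => by simpa using hb x)
  set G : V → ℝ := fun x => g x + M with hG
  have hGm : Measurable G := hg.add_const M
  have hGnn : ∀ x, 0 ≤ G x := fun x => by have := (abs_le.mp (hb x)).1; simp [hG]; linarith
  have hGle : ∀ x, G x ≤ 2 * M := fun x => by
    have := (abs_le.mp (hb x)).2; simp [hG]; linarith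
  have hint : ∀ (κ : Measure V) [IsProbabilityMeasure κ], Integrable G κ := by
    intro κ _; exact (hgint κ).add (integrable_const M)
  have key : ∀ (κ : Measure V) [IsProbabilityMeasure κ],
      ∫ x, G x ∂κ = ∫ t in Ioc 0 (2 * M), (κ {a | t ≤ G a}).toReal := by
    intro κ _
    exact (hint κ).integral_eq_integral_Ioc_meas_le (ae_of_all _ hGnn) (ae_of_all _ hGle)
  have hshift : ∀ (κ : Measure V) [IsProbabilityMeasure κ],
      ∫ x, G x ∂κ = ∫ x, g x ∂κ + M := by
    intro κ _
    rw [integral_add (hgint κ) (integrable_const M), integral_const]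
    simp
  have hFm : ∀ (κ : Measure V), Measurable fun t : ℝ => (κ {a | t ≤ G a}).toReal := by
    intro κ
    refine Measurable.ennreal_toReal (Antitone.measurable ?_)
    intro s t hst
    exact measure_mono fun a ha => le_trans hst ha
  have hFint : ∀ (κ : Measure V) [IsProbabilityMeasure κ],
      IntegrableOn (fun t : ℝ => (κ {a | t ≤ G a}).toReal) (Ioc 0 (2 * M)) := by
    intro κ _
    refine Integrable.mono' (integrableOn_const (C := (1:ℝ)) measure_Ioc_lt_top.ne)
      (hFm κ).aestronglyMeasurable (ae_of_all _ fun t => ?_)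
    simpa [abs_of_nonneg ENNReal.toReal_nonneg] using prob_toReal_le_one (μ := κ) (A := {a | t ≤ G a})
  have hdiff : ∫ x, g x ∂μ - ∫ x, g x ∂ν
      = ∫ t in Ioc 0 (2 * M), ((μ {a | t ≤ G a}).toReal - (ν {a | t ≤ G a}).toReal) := by
    have e1 := hshift μ; have e2 := hshift ν
    have h3 := integral_sub (hFint μ) (hFint ν)
    rw [← key μ, ← key ν, e1, e2] at h3
    linarith
  rw [hdiff]
  have hmono : ∫ t in Ioc 0 (2 * M), ((μ {a | t ≤ G a}).toReal - (ν {a | t ≤ G a}).toReal)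
      ≤ ∫ _ in Ioc 0 (2 * M), tvDist μ ν := by
    refine setIntegral_mono_on ((hFint μ).sub (hFint ν))
      (integrableOn_const (C := tvDist μ ν) measure_Ioc_lt_top.ne) measurableSet_Ioc fun t _ => ?_
    exact meas_diff_le_tvDist μ ν (hGm measurableSet_Ici)
  refine le_trans hmono ?_
  rw [setIntegral_const]
  rw [measureReal_def, Real.volume_Ioc]
  rw [smul_eq_mul, ENNReal.toReal_ofReal (by linarith)]
  nlinarith [tvDist_nonneg μ ν]

end aux

section tail
variable {m : ℕ}

lemma measS : Measurable (fun x : Fin m → ℝ => ∑ i, (x i) ^ 2) := by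
  exact Finset.measurable_sum _ fun i _ => ((measurable_pi_apply i).pow_const 2)

lemma Snn (x : Fin m → ℝ) : 0 ≤ ∑ i, (x i) ^ 2 :=
  Finset.sum_nonneg fun i _ => sq_nonneg _

lemma tail_bound (ν : Measure (Fin m → ℝ)) [IsProbabilityMeasure ν]
    (hS : Integrable (fun x => ∑ i, (x i) ^ 2) ν)
    {C c R : ℝ} (hC : 0 < C) (hc : 0 < c) (hR : 0 < R)
    (htail : ∀ s : ℝ, 0 < s →
      ν {x : Fin m → ℝ | s < ∑ i, (x i) ^ 2} ≤ ENNReal.ofReal (C * Real.exp (-c * s))) :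
    ∫ x, Set.indicator {x : Fin m → ℝ | R < ∑ i, (x i) ^ 2}
        (fun x => ∑ i, (x i) ^ 2) x ∂ν ≤ C * (R + 1 / c) * Real.exp (-c * R) := by
  set S : (Fin m → ℝ) → ℝ := fun x => ∑ i, (x i) ^ 2 with hSdef
  set T : Set (Fin m → ℝ) := {x | R < S x} with hT
  have hTm : MeasurableSet T := measurableSet_lt measurable_const measS
  set q : (Fin m → ℝ) → ℝ := T.indicator S with hq
  have hqm : Measurable q := measS.indicator hTm
  have hqnn : ∀ x, 0 ≤ q x := fun x => Set.indicator_nonneg (fun y _ => Snn y) x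
  have hqleS : ∀ x, q x ≤ S x := fun x => Set.indicator_le_self' (fun y _ => Snn y) x
  have hqint : Integrable q ν := hS.indicator hTm
  have e1 : ∫ x, q x ∂ν = (∫⁻ x, ENNReal.ofReal (q x) ∂ν).toReal := by
    rw [integral_eq_lintegral_of_nonneg_ae (ae_of_all _ hqnn) hqint.aestronglyMeasurable]
  have e2 : ∫⁻ x, ENNReal.ofReal (q x) ∂ν = ∫⁻ t in Set.Ioi (0:ℝ), ν {a | t < q a} :=
    lintegral_eq_lintegral_meas_lt ν (ae_of_all _ hqnn) hqm.aemeasurable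
  have hsplit : (Set.Ioi (0:ℝ)) = Set.Ioc 0 R ∪ Set.Ioi R := (Set.Ioc_union_Ioi_eq_Ioi hR.le).symm
  have e3 : ∫⁻ t in Set.Ioi (0:ℝ), ν {a | t < q a}
      = (∫⁻ t in Set.Ioc 0 R, ν {a | t < q a}) + ∫⁻ t in Set.Ioi R, ν {a | t < q a} := by
    rw [hsplit, lintegral_union measurableSet_Ioi Set.Ioc_disjoint_Ioi_same]
  have b1 : ∫⁻ t in Set.Ioc 0 R, ν {a | t < q a}
      ≤ ENNReal.ofReal (C * Real.exp (-c * R)) * ENNReal.ofReal R := by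
    calc ∫⁻ t in Set.Ioc 0 R, ν {a | t < q a}
        ≤ ∫⁻ _ in Set.Ioc 0 R, ENNReal.ofReal (C * Real.exp (-c * R)) := by
          refine setLIntegral_mono' measurableSet_Ioc fun t ht => ?_
          refine le_trans (measure_mono fun a ha => ?_) (htail R hR)
          -- a : t < q a, t > 0 ⇒ a ∈ T ⇒ R < S a
          simp only [Set.mem_setOf_eq] at ha ⊢
          by_contra hcon
          push_neg at hcon
          have : a ∉ T := by simp [hT, hSdef, not_lt.mpr hcon]
          rw [hq, Set.indicator_of_notMem this] at ha
          exact absurd ha (not_lt.mpr ht.1.le)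
      _ = ENNReal.ofReal (C * Real.exp (-c * R)) * ENNReal.ofReal R := by
          rw [setLIntegral_const, Real.volume_Ioc, sub_zero]
  have hexp_int : IntegrableOn (fun t : ℝ => C * Real.exp (-c * t)) (Set.Ioi R) := by
    exact (exp_neg_integrableOn_Ioi R hc).const_mul C
  have b2 : ∫⁻ t in Set.Ioi R, ν {a | t < q a}
      ≤ ENNReal.ofReal (C * (c⁻¹ * Real.exp (-c * R))) := by
    calc ∫⁻ t in Set.Ioi R, ν {a | t < q a}
        ≤ ∫⁻ t in Set.Ioi R, ENNReal.ofReal (C * Real.exp (-c * t)) := by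
          refine setLIntegral_mono' measurableSet_Ioi fun t ht => ?_
          have ht0 : (0:ℝ) < t := lt_trans hR ht
          refine le_trans (measure_mono fun a ha => ?_) (htail t ht0)
          simp only [Set.mem_setOf_eq] at ha ⊢
          exact lt_of_lt_of_le ha (hqleS a)
      _ = ENNReal.ofReal (∫ t in Set.Ioi R, C * Real.exp (-c * t)) := by
          rw [← ofReal_integral_eq_lintegral_ofReal hexp_int
            (ae_of_all _ fun t => by positivity)]
      _ = ENNReal.ofReal (C * (c⁻¹ * Real.exp (-c * R))) := by
          congr 1
          rw [MeasureTheory.integral_const_mul]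
          congr 1
          have := integral_comp_mul_left_Ioi (fun x : ℝ => Real.exp (-x)) R hc
          simp only [smul_eq_mul, neg_mul] at this ⊢
          rw [this, integral_exp_neg_Ioi]
  have final : ∫⁻ x, ENNReal.ofReal (q x) ∂ν
      ≤ ENNReal.ofReal (C * (R + 1 / c) * Real.exp (-c * R)) := by
    rw [e2, e3]
    refine le_trans (add_le_add b1 b2) ?_
    rw [← ENNReal.ofReal_mul (by positivity), ← ENNReal.ofReal_add (by positivity) (by positivity)]
    apply ENNReal.ofReal_le_ofReal
    rw [one_div]
    ring_nf
    apply le_of_eq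
    ring
  rw [e1]
  exact ENNReal.toReal_le_of_le_ofReal (by positivity) final

lemma cs_abs (w x : Fin m → ℝ) :
    |∑ i, w i * x i| ≤ Real.sqrt (∑ i, (w i) ^ 2) * Real.sqrt (∑ i, (x i) ^ 2) := by
  have h := Finset.sum_mul_sq_le_sq_mul_sq Finset.univ w x
  have h2 : |∑ i, w i * x i| = Real.sqrt ((∑ i, w i * x i) ^ 2) := (Real.sqrt_sq_eq_abs _).symm
  rw [h2, ← Real.sqrt_mul (Finset.sum_nonneg fun i _ => sq_nonneg _)]
  exact Real.sqrt_le_sqrt h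

lemma abs_bilin_le (w v x : Fin m → ℝ) :
    |(∑ i, w i * x i) * (∑ j, v j * x j)|
      ≤ Real.sqrt (∑ i, (w i) ^ 2) * Real.sqrt (∑ i, (v i) ^ 2) * ∑ i, (x i) ^ 2 := by
  rw [abs_mul]
  have h1 := cs_abs w x
  have h2 := cs_abs v x
  have hs : Real.sqrt (∑ i, (x i) ^ 2) * Real.sqrt (∑ i, (x i) ^ 2) = ∑ i, (x i) ^ 2 :=
    Real.mul_self_sqrt (Snn x)
  calc |∑ i, w i * x i| * |∑ j, v j * x j|
      ≤ (Real.sqrt (∑ i, (w i) ^ 2) * Real.sqrt (∑ i, (x i) ^ 2))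
        * (Real.sqrt (∑ i, (v i) ^ 2) * Real.sqrt (∑ i, (x i) ^ 2)) := by
        exact mul_le_mul h1 h2 (abs_nonneg _) (by positivity)
    _ = Real.sqrt (∑ i, (w i) ^ 2) * Real.sqrt (∑ i, (v i) ^ 2)
        * (Real.sqrt (∑ i, (x i) ^ 2) * Real.sqrt (∑ i, (x i) ^ 2)) := by ring
    _ = Real.sqrt (∑ i, (w i) ^ 2) * Real.sqrt (∑ i, (v i) ^ 2) * ∑ i, (x i) ^ 2 := by
        rw [hs]

lemma integrable_entry (ν : Measure (Fin m → ℝ))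
    (hS : Integrable (fun x => ∑ i, (x i) ^ 2) ν) (i j : Fin m) :
    Integrable (fun x => x i * x j) ν := by
  refine hS.mono' ((measurable_pi_apply i).mul (measurable_pi_apply j)).aestronglyMeasurable
    (ae_of_all _ fun x => ?_)
  have h1 : (x i)^2 ≤ ∑ k, (x k)^2 := Finset.single_le_sum (fun k _ => sq_nonneg (x k)) (Finset.mem_univ i)
  have h2 : (x j)^2 ≤ ∑ k, (x k)^2 := Finset.single_le_sum (fun k _ => sq_nonneg (x k)) (Finset.mem_univ j)
  have : |x i * x j| ≤ ((x i)^2 + (x j)^2)/2 := by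
    rw [abs_mul]
    nlinarith [sq_nonneg (|x i| - |x j|), sq_abs (x i), sq_abs (x j), abs_nonneg (x i), abs_nonneg (x j)]
  simp only [Real.norm_eq_abs]
  calc |x i * x j| ≤ ((x i)^2 + (x j)^2)/2 := this
    _ ≤ ∑ k, (x k)^2 := by linarith

lemma integrable_bilin (ν : Measure (Fin m → ℝ))
    (hS : Integrable (fun x => ∑ i, (x i) ^ 2) ν) (w v : Fin m → ℝ) :
    Integrable (fun x => (∑ i, w i * x i) * (∑ j, v j * x j)) ν := by
  refine (hS.const_mul (Real.sqrt (∑ i, (w i) ^ 2) * Real.sqrt (∑ i, (v i) ^ 2))).mono'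
    ?_ (ae_of_all _ fun x => ?_)
  · apply Measurable.aestronglyMeasurable
    exact (Finset.measurable_sum _ fun i _ => by fun_prop).mul
      (Finset.measurable_sum _ fun j _ => by fun_prop)
  · simp only [Real.norm_eq_abs]
    exact abs_bilin_le w v x

lemma integral_bilin (ν : Measure (Fin m → ℝ))
    (hS : Integrable (fun x => ∑ i, (x i) ^ 2) ν) (w v : Fin m → ℝ) :
    ∫ x, (∑ i, w i * x i) * (∑ j, v j * x j) ∂ν
      = ∑ i, ∑ j, w i * v j * ∫ x, x i * x j ∂ν := by
  have expand : ∀ x : Fin m → ℝ, (∑ i, w i * x i) * (∑ j, v j * x j)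
      = ∑ i, ∑ j, w i * v j * (x i * x j) := by
    intro x
    rw [Finset.sum_mul_sum]
    congr 1; ext i; congr 1; ext j; ring
  simp_rw [expand]
  rw [integral_finset_sum _ fun i _ => integrable_finset_sum _ fun j _ =>
    (integrable_entry ν hS i j).const_mul _]
  congr 1; ext i
  rw [integral_finset_sum _ fun j _ => (integrable_entry ν hS i j).const_mul _]
  congr 1; ext j
  rw [integral_const_mul]

end tail

section key
variable {m : ℕ}

lemma key_diff (μ π : Measure (Fin m → ℝ))
    [IsProbabilityMeasure μ] [IsProbabilityMeasure π]
    (hμ : Integrable (fun x => ∑ i, (x i) ^ 2) μ)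
    (hπ : Integrable (fun x => ∑ i, (x i) ^ 2) π)
    {C c R : ℝ} (hC : 0 < C) (hc : 0 < c) (hR : 0 < R)
    (htailμ : ∀ s : ℝ, 0 < s →
      μ {x : Fin m → ℝ | s < ∑ i, (x i) ^ 2} ≤ ENNReal.ofReal (C * Real.exp (-c * s)))
    (htailπ : ∀ s : ℝ, 0 < s →
      π {x : Fin m → ℝ | s < ∑ i, (x i) ^ 2} ≤ ENNReal.ofReal (C * Real.exp (-c * s)))
    (w v : Fin m → ℝ) :
    ∫ x, (∑ i, w i * x i) * (∑ j, v j * x j) ∂μ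
      - ∫ x, (∑ i, w i * x i) * (∑ j, v j * x j) ∂π
    ≤ Real.sqrt (∑ i, (w i) ^ 2) * Real.sqrt (∑ i, (v i) ^ 2)
        * (2 * R * tvDist μ π + 2 * C * (R + 1 / c) * Real.exp (-c * R)) := by
  set N := Real.sqrt (∑ i, (w i) ^ 2) * Real.sqrt (∑ i, (v i) ^ 2) with hN
  have hNnn : 0 ≤ N := by positivity
  set S : (Fin m → ℝ) → ℝ := fun x => ∑ i, (x i) ^ 2 with hSdef
  set T : Set (Fin m → ℝ) := {x | R < S x} with hT
  have hTm : MeasurableSet T := measurableSet_lt measurable_const measS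
  set f : (Fin m → ℝ) → ℝ := fun x => (∑ i, w i * x i) * (∑ j, v j * x j) with hf
  have hfm : Measurable f :=
    (Finset.measurable_sum _ fun i _ => by fun_prop).mul
      (Finset.measurable_sum _ fun j _ => by fun_prop)
  have hfb : ∀ x, |f x| ≤ N * S x := fun x => abs_bilin_le w v x
  set g : (Fin m → ℝ) → ℝ := Tᶜ.indicator f with hg
  set ft : (Fin m → ℝ) → ℝ := T.indicator f with hft
  have hdecomp : ∀ x, f x = g x + ft x := by
    intro x
    rw [hg, hft, add_comm]
    exact (Set.indicator_self_add_compl_apply T f x).symm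
  have hgb : ∀ x, |g x| ≤ N * R := by
    intro x
    by_cases hx : x ∈ Tᶜ
    · rw [hg, Set.indicator_of_mem hx]
      refine le_trans (hfb x) (mul_le_mul_of_nonneg_left ?_ hNnn)
      simpa [hT] using hx
    · rw [hg, Set.indicator_of_notMem hx]
      simp only [abs_zero]
      positivity
  have hftb : ∀ x, |ft x| ≤ N * T.indicator S x := by
    intro x
    by_cases hx : x ∈ T
    · rw [hft, Set.indicator_of_mem hx, Set.indicator_of_mem hx]
      exact hfb x
    · rw [hft, Set.indicator_of_notMem hx, Set.indicator_of_notMem hx]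
      simp
  have hgm : Measurable g := hfm.indicator hTm.compl
  have hgint : ∀ (κ : Measure (Fin m → ℝ)) [IsProbabilityMeasure κ],
      Integrable (fun x => ∑ i, (x i) ^ 2) κ → Integrable g κ := by
    intro κ _ hS
    exact (integrable_bilin κ hS w v).indicator hTm.compl
  have hftint : ∀ (κ : Measure (Fin m → ℝ)) [IsProbabilityMeasure κ],
      Integrable (fun x => ∑ i, (x i) ^ 2) κ → Integrable ft κ := by
    intro κ _ hS
    exact (integrable_bilin κ hS w v).indicator hTm
  have hsplit : ∀ (κ : Measure (Fin m → ℝ)) [IsProbabilityMeasure κ],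
      Integrable (fun x => ∑ i, (x i) ^ 2) κ →
      ∫ x, f x ∂κ = ∫ x, g x ∂κ + ∫ x, ft x ∂κ := by
    intro κ _ hS
    rw [← integral_add (hgint κ hS) (hftint κ hS)]
    exact integral_congr_ae (ae_of_all _ hdecomp)
  have htailint : ∀ (κ : Measure (Fin m → ℝ)) [IsProbabilityMeasure κ]
      (hS : Integrable (fun x => ∑ i, (x i) ^ 2) κ)
      (htail : ∀ s : ℝ, 0 < s →
        κ {x : Fin m → ℝ | s < ∑ i, (x i) ^ 2} ≤ ENNReal.ofReal (C * Real.exp (-c * s))),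
      |∫ x, ft x ∂κ| ≤ N * (C * (R + 1 / c) * Real.exp (-c * R)) := by
    intro κ _ hS htail
    have h1 : |∫ x, ft x ∂κ| ≤ ∫ x, |ft x| ∂κ := by
      simpa [Real.norm_eq_abs] using norm_integral_le_integral_norm (μ := κ) ft
    have h2 : ∫ x, |ft x| ∂κ ≤ ∫ x, N * T.indicator S x ∂κ := by
      refine integral_mono (hftint κ hS).abs ((hS.indicator hTm).const_mul N) hftb
    have h3 : ∫ x, N * T.indicator S x ∂κ = N * ∫ x, T.indicator S x ∂κ := integral_const_mul N _
    have h4 := tail_bound κ hS hC hc hR htail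
    calc |∫ x, ft x ∂κ| ≤ ∫ x, N * T.indicator S x ∂κ := le_trans h1 h2
      _ = N * ∫ x, T.indicator S x ∂κ := h3
      _ ≤ N * (C * (R + 1 / c) * Real.exp (-c * R)) := mul_le_mul_of_nonneg_left h4 hNnn
  have hA : ∫ x, g x ∂μ - ∫ x, g x ∂π ≤ 2 * (N * R) * tvDist μ π :=
    integral_diff_le_of_bounded μ π hgm (by positivity) hgb
  have hBμ := htailint μ hμ htailμ
  have hBπ := htailint π hπ htailπ
  have e1 := hsplit μ hμ
  have e2 := hsplit π hπ
  have habs1 := abs_le.mp hBμ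
  have habs2 := abs_le.mp hBπ
  calc ∫ x, f x ∂μ - ∫ x, f x ∂π
      = (∫ x, g x ∂μ - ∫ x, g x ∂π) + (∫ x, ft x ∂μ - ∫ x, ft x ∂π) := by
        rw [e1, e2]; ring
    _ ≤ 2 * (N * R) * tvDist μ π
        + (N * (C * (R + 1 / c) * Real.exp (-c * R)) + N * (C * (R + 1 / c) * Real.exp (-c * R))) := by
        have := habs1.2
        have := habs2.1
        have := abs_le.mp hBμ
        linarith [habs1.2, habs2.1, hA]
    _ = N * (2 * R * tvDist μ π + 2 * C * (R + 1 / c) * Real.exp (-c * R)) := by ring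

end key

/-- The explicit-constant, zero-mean form of Lemma 2.4 of the paper: if
`D_TV(μ, π) ≤ K ρ^h` and both measures have sub-Gaussian tails
`μ(‖x‖₂² > s) ≤ C e^{−c s}`, then the spectral-norm bias of the second-moment matrices
satisfies `‖M(μ) − M(π)‖₂ ≤ 2K ρ^{h/3} + 2C(ρ^{−2h/3} + 1/c) e^{−c ρ^{−2h/3}}`. -/
theorem secondMoment_bias_geometric_ergodic (m : ℕ) (μ π : Measure (Fin m → ℝ))
    [IsProbabilityMeasure μ] [IsProbabilityMeasure π]
    (hμ : Integrable (fun x => ∑ i, (x i) ^ 2) μ)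
    (hπ : Integrable (fun x => ∑ i, (x i) ^ 2) π)
    (K ρ : ℝ) (h : ℝ) (hK : 0 < K) (hρ : ρ ∈ Set.Ioo (0 : ℝ) 1) (hh : 0 ≤ h)
    (htv : tvDist μ π ≤ K * ρ ^ h)
    (C c : ℝ) (hC : 0 < C) (hc : 0 < c)
    (htailμ : ∀ s : ℝ, 0 < s →
      μ {x : Fin m → ℝ | s < ∑ i, (x i) ^ 2} ≤ ENNReal.ofReal (C * Real.exp (-c * s)))
    (htailπ : ∀ s : ℝ, 0 < s →
      π {x : Fin m → ℝ | s < ∑ i, (x i) ^ 2} ≤ ENNReal.ofReal (C * Real.exp (-c * s))) :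
    matrixSpectralNorm (secondMoment μ - secondMoment π) ≤
      2 * K * ρ ^ (h / 3)
        + 2 * C * (ρ ^ (-(2 * h / 3)) + 1 / c) * Real.exp (-c * ρ ^ (-(2 * h / 3))) := by
  obtain ⟨hρ0, hρ1⟩ := hρ
  set R : ℝ := ρ ^ (-(2 * h / 3)) with hRdef
  have hR : 0 < R := Real.rpow_pos_of_pos hρ0 _
  have htv0 : 0 ≤ tvDist μ π := tvDist_nonneg μ π
  set B : ℝ := 2 * K * ρ ^ (h / 3) + 2 * C * (R + 1 / c) * Real.exp (-c * R) with hBdef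
  have hB : 0 ≤ B := by
    have h1 : (0:ℝ) < ρ ^ (h / 3) := Real.rpow_pos_of_pos hρ0 _
    have h2 : (0:ℝ) < Real.exp (-c * R) := Real.exp_pos _
    positivity
  have harith : R * ρ ^ h = ρ ^ (h / 3) := by
    rw [hRdef, ← Real.rpow_add hρ0]
    congr 1
    ring
  have hparen : 2 * R * tvDist μ π + 2 * C * (R + 1 / c) * Real.exp (-c * R) ≤ B := by
    rw [hBdef]
    have : 2 * R * tvDist μ π ≤ 2 * K * ρ ^ (h / 3) := by
      calc 2 * R * tvDist μ π ≤ 2 * R * (K * ρ ^ h) := by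
            apply mul_le_mul_of_nonneg_left htv (by positivity)
        _ = 2 * K * (R * ρ ^ h) := by ring
        _ = 2 * K * ρ ^ (h / 3) := by rw [harith]
    linarith
  set A : Matrix (Fin m) (Fin m) ℝ := secondMoment μ - secondMoment π with hA
  unfold matrixSpectralNorm
  refine ContinuousLinearMap.opNorm_le_bound _ hB fun v => ?_
  set T := LinearMap.toContinuousLinearMap (Matrix.toEuclideanLin A) with hTdef
  set v' : Fin m → ℝ := WithLp.equiv 2 (Fin m → ℝ) v with hv'
  set w' : Fin m → ℝ := A *ᵥ v' with hw'
  have hTv : (T v : EuclideanSpace ℝ (Fin m)) = (WithLp.equiv 2 (Fin m → ℝ)).symm w' := by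
    rw [hTdef]
    simp only [LinearMap.coe_toContinuousLinearMap']
    rw [Matrix.toEuclideanLin_apply]
    rfl
  have hnorm_eq : ∀ y : Fin m → ℝ,
      ‖((WithLp.equiv 2 (Fin m → ℝ)).symm y : EuclideanSpace ℝ (Fin m))‖
        = Real.sqrt (∑ i, (y i) ^ 2) := by
    intro y
    rw [EuclideanSpace.norm_eq]
    congr 1
    refine Finset.sum_congr rfl fun i _ => ?_
    rw [Real.norm_eq_abs, sq_abs]
    simp
  have hTvnorm : ‖T v‖ = Real.sqrt (∑ i, (w' i) ^ 2) := by rw [hTv, hnorm_eq]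
  have hvnorm : ‖v‖ = Real.sqrt (∑ i, (v' i) ^ 2) := by
    have : v = (WithLp.equiv 2 (Fin m → ℝ)).symm v' := by simp [hv']
    rw [this, hnorm_eq]
  have hAij : ∀ i j, A i j = (∫ x, x i * x j ∂μ) - (∫ x, x i * x j ∂π) := by
    intro i j
    simp [hA, secondMoment, Matrix.sub_apply]
  have hsum : ∑ i, w' i * w' i
      = ∫ x, (∑ i, w' i * x i) * (∑ j, v' j * x j) ∂μ
        - ∫ x, (∑ i, w' i * x i) * (∑ j, v' j * x j) ∂π := by
    rw [integral_bilin μ hμ w' v', integral_bilin π hπ w' v']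
    rw [← Finset.sum_sub_distrib]
    refine Finset.sum_congr rfl fun i _ => ?_
    rw [← Finset.sum_sub_distrib]
    have hwi : w' i = ∑ j, A i j * v' j := by
      rw [hw']; simp [Matrix.mulVec, dotProduct]
    nth_rewrite 2 [hwi]
    rw [Finset.mul_sum]
    refine Finset.sum_congr rfl fun j _ => ?_
    rw [hAij i j]
    ring
  have hkey := key_diff μ π hμ hπ hC hc hR htailμ htailπ w' v'
  have hsq : ‖T v‖ * ‖T v‖ = ∑ i, w' i * w' i := by
    rw [hTvnorm, Real.mul_self_sqrt (Finset.sum_nonneg fun i _ => sq_nonneg _)]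
    refine Finset.sum_congr rfl fun i _ => (sq (w' i)).symm ▸ by ring
  have hmain : ‖T v‖ * ‖T v‖ ≤ ‖T v‖ * (‖v‖ * B) := by
    rw [hsq, hsum]
    calc _ ≤ Real.sqrt (∑ i, (w' i) ^ 2) * Real.sqrt (∑ i, (v' i) ^ 2)
          * (2 * R * tvDist μ π + 2 * C * (R + 1 / c) * Real.exp (-c * R)) := hkey
      _ ≤ Real.sqrt (∑ i, (w' i) ^ 2) * Real.sqrt (∑ i, (v' i) ^ 2) * B := by
          apply mul_le_mul_of_nonneg_left hparen (by positivity)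
      _ = ‖T v‖ * (‖v‖ * B) := by rw [hTvnorm, hvnorm]; ring
  rcases eq_or_lt_of_le (norm_nonneg (T v)) with h0 | h0
  · rw [← h0]
    positivity
  · have := le_of_mul_le_mul_left hmain h0
    linarith [this]
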